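/- The 5-wave resonance family from cyclotomic polynomials of length 3: let $3 \mid N$, and let integers $n, q$ satisfy $1 \le n \le N/3 - 1$, $1 \le q \le N-1$, and $n + N/3 + 2q \equiv 0 \pmod{N}$. Then the quintet $(n, 2N/3 + n, q; N/3 + n, N - q)$ satisfies both the momentum condition $n + (2N/3 + n) + q \equiv (N/3 + n) + (N - q) \pmod{N}$ and the frequency condition $\omega(n) + \omega(2N/3+n) + \omega(q) = \omega(N/3+n) + \omega(N-q)$, where $\omega(k) = 2\sin(\pi k/N)$. -/

import Mathlib

/-- The 5-wave resonance family from cyclotomic polynomials of length 3: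
for `3 ∣ N`, `1 ≤ n ≤ N/3 - 1`, `1 ≤ q ≤ N - 1` with `n + N/3 + 2q ≡ 0 (mod N)`,
the quintet `(n, 2N/3 + n, q; N/3 + n, N - q)` satisfies both the momentum and
frequency resonance conditions. -/
theorem five_wave_resonance_family (N : ℕ) (hN : 0 < N) (h3 : 3 ∣ N)
    (n q : ℕ) (hn : 1 ≤ n) (hn' : n ≤ N / 3 - 1) (hq : 1 ≤ q) (hq' : q ≤ N - 1)
    (hmod : (n + N / 3 + 2 * q) % N = 0) :
    n + (2 * N / 3 + n) + q ≡ (N / 3 + n) + (N - q) [MOD N] ∧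
    2 * Real.sin (Real.pi * (n : ℝ) / N) +
        2 * Real.sin (Real.pi * ((2 * N / 3 + n : ℕ) : ℝ) / N) +
        2 * Real.sin (Real.pi * (q : ℝ) / N) =
      2 * Real.sin (Real.pi * ((N / 3 + n : ℕ) : ℝ) / N) +
        2 * Real.sin (Real.pi * ((N - q : ℕ) : ℝ) / N) := by
  obtain ⟨m, rfl⟩ := h3
  have hm : 0 < m := by omega
  have hd1 : 3 * m / 3 = m := by omega
  have hd2 : 2 * (3 * m) / 3 = 2 * m := by omega
  simp only [hd1, hd2] at hmod ⊢
  constructor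
  · obtain ⟨k, hk⟩ := Nat.dvd_of_mod_eq_zero hmod
    rw [Nat.modEq_iff_dvd]
    refine ⟨1 - (k : ℤ), ?_⟩
    have hk' : (n : ℤ) + m + 2 * q = 3 * m * k := by exact_mod_cast hk
    push_cast [show q ≤ 3 * m by omega]
    linear_combination -hk'
  · have hNR : ((3 * m : ℕ) : ℝ) ≠ 0 := by positivity
    have hqN : q ≤ 3 * m := by omega
    have hc1 : ((2 * m + n : ℕ) : ℝ) = 2 * m + n := by push_cast; ring
    have hc2 : ((m + n : ℕ) : ℝ) = m + n := by push_cast; ring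
    have hc3 : ((3 * m - q : ℕ) : ℝ) = 3 * m - q := by
      push_cast [hqN]; ring
    rw [hc1, hc2, hc3]
    have e0 : Real.pi * ((3:ℝ) * m - q) / ((3 * m : ℕ) : ℝ)
        = Real.pi - Real.pi * q / ((3 * m : ℕ) : ℝ) := by
      field_simp
      push_cast
      ring
    have e1 : Real.pi * ((2:ℝ) * m + n) / ((3 * m : ℕ) : ℝ)
        = Real.pi * n / ((3 * m : ℕ) : ℝ) + (Real.pi - Real.pi / 3) := by
      field_simp
      push_cast
      ring
    have e2 : Real.pi * ((m : ℝ) + n) / ((3 * m : ℕ) : ℝ)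
        = Real.pi * n / ((3 * m : ℕ) : ℝ) + Real.pi / 3 := by
      field_simp
      push_cast
      ring
    rw [e0, e1, e2, Real.sin_pi_sub, Real.sin_add, Real.sin_add, Real.sin_pi_sub,
      Real.cos_pi_sub, Real.sin_pi_div_three, Real.cos_pi_div_three]
    ring
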